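/- Rescaling runs of a fully parametric one-parameter timed automaton: let A be a timed automaton all of whose guards and invariants are conjunctions of constraints of the form x ⋈ α·c for a fixed constant c ∈ ℕ (the valuated parameter) with α ∈ ℤ, and let t ∈ ℚ, t > 0, be such that t·c ∈ ℕ. If (ℓ₀, μ₀) →^{(d₀,τ₀)} (ℓ₁, μ₁) →^{(d₁,τ₁)} ⋯ →^{(d_{k−1},τ_{k−1})} (ℓ_k, μ_k) is a run of A, then (ℓ₀, t·μ₀) →^{(t·d₀,τ₀)} (ℓ₁, t·μ₁) →^{(t·d₁,τ₁)} ⋯ (ℓ_k, t·μ_k) is a run of the automaton A' obtained from A by replacing the constant c by t·c everywhere. -/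

import Mathlib

open Classical in
/-- Reset of a clock valuation. -/
noncomputable def reset {X : Type*} (μ : X → NNReal) (R : Set X) : X → NNReal :=
  fun x => if x ∈ R then 0 else μ x

/-- Comparison operators `⋈ ∈ {<, ≤, =, ≥, >}`. -/
inductive Cmp | lt | le | eq | ge | gt

/-- Interpretation of a comparison operator over the reals. -/
def Cmp.eval : Cmp → ℝ → ℝ → Prop
  | .lt, a, b => a < b
  | .le, a, b => a ≤ b
  | .eq, a, b => a = b
  | .ge, a, b => a ≥ b
  | .gt, a, b => a > b

/-- A fully parametric atomic constraint `x ⋈ α·c`, where the constant `c`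
(the valuated parameter) is supplied at satisfaction time. -/
structure Atom (X : Type*) where
  clock : X
  cmp : Cmp
  coef : ℤ

/-- Satisfaction of `x ⋈ α·k` by a clock valuation `μ`, for constant `k`. -/
def Atom.sat {X : Type*} (a : Atom X) (k : ℝ) (μ : X → NNReal) : Prop :=
  a.cmp.eval (μ a.clock) ((a.coef : ℝ) * k)

/-- A fully parametric timed automaton with a single parameter: the constraint
constant is left abstract and supplied at semantics time. -/
structure FPTA (L X Act : Type*) where
  init : L
  inv : L → List (Atom X)
  edges : Set (L × List (Atom X) × Act × Set X × L)

/-- Edges: source, guard, action, reset set, target. -/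
abbrev Edge (L X Act : Type*) := L × List (Atom X) × Act × Set X × L

/-- Combined delay-then-discrete step `(ℓ, μ) →^{(d, τ)} (ℓ', μ')` of the
automaton with constraint constant `k`. -/
def Step {L X Act : Type*} (A : FPTA L X Act) (k : ℝ) (ℓ : L) (μ : X → NNReal)
    (d : NNReal) (τ : Edge L X Act) (ℓ' : L) (μ' : X → NNReal) : Prop :=
  τ ∈ A.edges ∧ τ.1 = ℓ ∧ τ.2.2.2.2 = ℓ' ∧
  (∀ d' : NNReal, d' ≤ d → ∀ a ∈ A.inv ℓ, a.sat k (fun x => μ x + d')) ∧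
  (∀ a ∈ τ.2.1, a.sat k (fun x => μ x + d)) ∧
  μ' = reset (fun x => μ x + d) τ.2.2.2.1 ∧
  (∀ a ∈ A.inv ℓ', a.sat k μ')

/-- A run of the automaton with constant `k`: it starts in the initial location
with all clocks at `0`, and each consecutive pair is related by a combined step. -/
def IsRun {L X Act : Type*} (A : FPTA L X Act) (k : ℝ) {m : ℕ}
    (ℓs : Fin (m + 1) → L) (μs : Fin (m + 1) → X → NNReal)
    (ds : Fin m → NNReal) (τs : Fin m → Edge L X Act) : Prop :=
  ℓs 0 = A.init ∧ μs 0 = (fun _ => 0) ∧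
  ∀ i : Fin m,
    Step A k (ℓs i.castSucc) (μs i.castSucc) (ds i) (τs i) (ℓs i.succ) (μs i.succ)

/-- Rescaling runs of a fully parametric one-parameter timed automaton: replacing
the constant `c` by `t·c = c'` and multiplying all clock values and delays by the
positive rational `t` transforms a run of `A` into a run of the rescaled automaton,
along the same locations and edges. -/
theorem rescale_run {L X Act : Type*} (A : FPTA L X Act) (c : ℕ) (t : ℚ)
    (ht : 0 < t) (c' : ℕ) (hc' : (c' : ℚ) = t * (c : ℚ)) {m : ℕ}
    (ℓs : Fin (m + 1) → L) (μs : Fin (m + 1) → X → NNReal)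
    (ds : Fin m → NNReal) (τs : Fin m → Edge L X Act)
    (h : IsRun A (c : ℝ) ℓs μs ds τs) :
    IsRun A (c' : ℝ) ℓs (fun i x => ((t : ℝ).toNNReal) * μs i x)
      (fun i => ((t : ℝ).toNNReal) * ds i) τs := by
  obtain ⟨h0, hμ0, hstep⟩ := h
  set T : NNReal := (t : ℝ).toNNReal with hT
  have htR : (0:ℝ) < (t:ℝ) := by exact_mod_cast ht
  have hTc : (T : ℝ) = (t : ℝ) := Real.coe_toNNReal _ htR.le
  have hTpos : 0 < (T : ℝ) := by rw [hTc]; exact htR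
  have hTne : T ≠ 0 := by
    intro hz
    rw [hz] at hTpos; simp at hTpos
  have hcc : ((c' : ℝ)) = (T : ℝ) * (c : ℝ) := by
    rw [hTc]; exact_mod_cast hc'
  have hkey : ∀ (a : Atom X) (μ : X → NNReal),
      a.sat (c:ℝ) μ → a.sat (c':ℝ) (fun x => T * μ x) := by
    rintro ⟨cl, cmp, coef⟩ μ hs
    unfold Atom.sat at *
    simp only at hs ⊢
    have h1 : (coef : ℝ) * (c' : ℝ) = (T:ℝ) * ((coef:ℝ) * (c:ℝ)) := by
      rw [hcc]; ring
    have h2 : (((fun x => T * μ x) cl : NNReal) : ℝ) = (T:ℝ) * (μ cl : ℝ) := by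
      push_cast; ring
    rw [h1, h2]
    cases cmp with
    | lt => simp only [Cmp.eval] at hs ⊢; exact (mul_lt_mul_iff_right₀ hTpos).mpr hs
    | le => simp only [Cmp.eval] at hs ⊢; exact (mul_le_mul_iff_right₀ hTpos).mpr hs
    | eq => simp only [Cmp.eval] at hs ⊢; exact congrArg ((T:ℝ) * ·) hs
    | ge => simp only [Cmp.eval, ge_iff_le] at hs ⊢; exact (mul_le_mul_iff_right₀ hTpos).mpr hs
    | gt => simp only [Cmp.eval, gt_iff_lt] at hs ⊢; exact (mul_lt_mul_iff_right₀ hTpos).mpr hs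
  refine ⟨h0, ?_, ?_⟩
  · funext x; simp [hμ0]
  intro i
  obtain ⟨he, hs1, hs2, hinv, hg, hres, hinv'⟩ := hstep i
  refine ⟨he, hs1, hs2, ?_, ?_, ?_, ?_⟩
  · intro d' hd' a ha
    set e : NNReal := d' / T with hed
    have hTe : T * e = d' := by
      rw [hed, mul_div_cancel₀ _ hTne]
    have hle : e ≤ ds i := by
      rw [hed, div_le_iff₀ hTne.bot_lt, mul_comm]; exact hd'
    have := hkey a _ (hinv e hle a ha)
    have heq : (fun x => T * (μs i.castSucc x + e)) =
        (fun x => T * μs i.castSucc x + d') := by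
      funext x; rw [mul_add, hTe]
    rwa [heq] at this
  · intro a ha
    have := hkey a _ (hg a ha)
    have heq : (fun x => T * (μs i.castSucc x + ds i)) =
        (fun x => T * μs i.castSucc x + T * ds i) := by
      funext x; rw [mul_add]
    rwa [heq] at this
  · funext x
    simp only [hres, reset]
    split <;> simp [mul_add]
  · intro a ha
    exact hkey a _ (hinv' a ha)
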